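/- Let K be a convex body and C a Minkowski-centered full-dimensional convex body in R^n with 0 in its interior. Then D_HM(K,C) ≥ ((n+1)²/(2n²))·R(K,C). In particular in the plane D_HM(K,C) ≥ (9/8)·R(K,C). -/

import Mathlib

open Pointwise Set

variable {V : Type*} [NormedAddCommGroup V] [NormedSpace ℝ V]

/-- Circumradius `R(K,C) = inf {ρ ≥ 0 : ∃ t, K ⊆ t + ρC}`. -/
noncomputable def circumradius (K C : Set V) : ℝ :=
  sInf {ρ : ℝ | 0 ≤ ρ ∧ ∃ t : V, K ⊆ t +ᵥ ρ • C}

/-- Inradius `r(K,C) = sup {ρ ≥ 0 : ∃ t, t + ρC ⊆ K}`. -/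
noncomputable def inradius (K C : Set V) : ℝ :=
  sSup {ρ : ℝ | 0 ≤ ρ ∧ ∃ t : V, t +ᵥ ρ • C ⊆ K}

/-- Optimal containment: `K ⊆ C` and `R(K,C) = 1`. -/
def OptCont (K C : Set V) : Prop := K ⊆ C ∧ circumradius K C = 1

/-- Minkowski asymmetry `s(C) = R(C, -C)`. -/
noncomputable def minkAsym (C : Set V) : ℝ := circumradius C (-C)

/-- `C` is Minkowski-centered if `C ⊆opt s(C) • (-C)`. -/
def MinkowskiCentered (C : Set V) : Prop := OptCont C (minkAsym C • (-C))

/-- Arithmetic symmetrization `(K - K)/2`. -/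
def symAM (K : Set V) : Set V := (2 : ℝ)⁻¹ • (K - K)

/-- Maximum symmetrization `conv (C ∪ -C)`. -/
def symMAX (C : Set V) : Set V := convexHull ℝ (C ∪ -C)

/-- Minimum symmetrization `C ∩ -C`. -/
def symMIN (C : Set V) : Set V := C ∩ -C

/-- The maximum diameter `D_MAX(K,C) = 2 R((K-K)/2, conv(C ∪ -C))`. -/
noncomputable def DMAX (K C : Set V) : ℝ := 2 * circumradius (symAM K) (symMAX C)

/-- The minimum diameter `D_MIN(K,C) = 2 R((K-K)/2, C ∩ -C)`. -/
noncomputable def DMIN (K C : Set V) : ℝ := 2 * circumradius (symAM K) (symMIN C)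

/-- A body is complete (w.r.t. a diameter functional `D`) if every strictly larger
convex body has strictly larger diameter. -/
def IsCompleteBody (D : Set V → ℝ) (K : Set V) : Prop :=
  ∀ K' : Set V, Convex ℝ K' → IsCompact K' → K ⊂ K' → D K < D K'

/-- `Kstar` is a completion of `K` w.r.t. the diameter functional `D`. -/
def IsCompletion (D : Set V → ℝ) (K Kstar : Set V) : Prop :=
  K ⊆ Kstar ∧ Convex ℝ Kstar ∧ IsCompact Kstar ∧ IsCompleteBody D Kstar ∧ D Kstar = D K

/-- Polar set `C° = {a : ∀ x ∈ C, ⟪a,x⟫ ≤ 1}`. -/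
def polarSet {n : ℕ} (C : Set (EuclideanSpace ℝ (Fin n))) : Set (EuclideanSpace ℝ (Fin n)) :=
  {a | ∀ x ∈ C, (inner ℝ a x : ℝ) ≤ 1}

/-- Harmonic symmetrization `C_HM = ((C° - C°)/2)°`. -/
def symHM {n : ℕ} (C : Set (EuclideanSpace ℝ (Fin n))) : Set (EuclideanSpace ℝ (Fin n)) :=
  polarSet ((2 : ℝ)⁻¹ • (polarSet C - polarSet C))

/-- The harmonic diameter `D_HM(K,C) = 2 R((K-K)/2, C_HM)`. -/
noncomputable def DHM {n : ℕ} (K C : Set (EuclideanSpace ℝ (Fin n))) : ℝ :=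
  2 * circumradius (symAM K) (symHM C)

/-- Support function `h_C(s) = sup_{x ∈ C} ⟪s, x⟫`. -/
noncomputable def supportFn {n : ℕ} (C : Set (EuclideanSpace ℝ (Fin n)))
    (s : EuclideanSpace ℝ (Fin n)) : ℝ :=
  sSup ((fun x => (inner ℝ s x : ℝ)) '' C)

-- Auxiliary lemmas
/-- Helly-based covering: every convex body is covered by a translate of `n • (-K)`. -/
lemma exists_cover_aux {n : ℕ} (hn : 1 ≤ n) {K : Set (EuclideanSpace ℝ (Fin n))}
    (hK : Convex ℝ K) (hKc : IsCompact K) (hne : K.Nonempty) :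
    ∃ t : EuclideanSpace ℝ (Fin n), K ⊆ t +ᵥ (n : ℝ) • (-K) := by
  classical
  have hν : (0:ℝ) < n := by exact_mod_cast hn
  haveI : Nonempty K := hne.to_subtype
  set F : K → Set (EuclideanSpace ℝ (Fin n)) := fun x => (x : EuclideanSpace ℝ (Fin n)) +ᵥ (n:ℝ) • K with hF
  have hiter : (⋂ x : K, F x).Nonempty := by
    apply Convex.helly_theorem_compact' (𝕜 := ℝ)
    · intro x; exact (hK.smul _).vadd _
    · intro x
      have h1 : IsCompact ((n:ℝ) • K) := by
        rw [show (n:ℝ) • K = ((n:ℝ) • ·) '' K from (Set.image_smul).symm]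
        exact hKc.image (continuous_const_smul _)
      exact h1.vadd _
    · intro I hI
      rcases I.eq_empty_or_nonempty with rfl | hIne
      · simp
      have hmpos : (0:ℝ) < (I.card : ℝ) := by exact_mod_cast Finset.card_pos.2 hIne
      have hmle : ((I.card : ℝ)) ≤ (n:ℝ) + 1 := by
        rw [finrank_euclideanSpace_fin] at hI; exact_mod_cast hI
      set m : ℝ := (I.card : ℝ) with hm
      set sObj : EuclideanSpace ℝ (Fin n) := ∑ j ∈ I, (j : EuclideanSpace ℝ (Fin n)) with hsObj
      refine ⟨(((n:ℝ)+1)/m) • sObj, ?_⟩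
      rw [Set.mem_iInter₂]
      intro i hi
      rw [hF]
      rw [Set.mem_vadd_set_iff_neg_vadd_mem]
      set w : K → ℝ := fun j => ((n:ℝ)+1)/(m*(n:ℝ)) - (if j = i then (n:ℝ)⁻¹ else 0) with hw
      have hzK : ∑ j ∈ I, w j • (j : EuclideanSpace ℝ (Fin n)) ∈ K := by
        apply hK.sum_mem
        · intro j hj
          rw [hw]; dsimp only
          have hite : (if j = i then (n:ℝ)⁻¹ else 0) ≤ (n:ℝ)⁻¹ := by
            split
            · exact le_refl _
            · positivity
          have hbd : (n:ℝ)⁻¹ ≤ ((n:ℝ)+1)/(m*(n:ℝ)) := by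
            rw [inv_eq_one_div, div_le_div_iff₀ hν (by positivity)]
            nlinarith
          linarith
        · rw [hw]
          rw [Finset.sum_sub_distrib, Finset.sum_const, Finset.sum_ite_eq' I i, if_pos hi,
            nsmul_eq_mul]
          rw [← hm]
          field_simp
          ring
        · exact fun j _ => j.2
      refine Set.mem_smul_set.2 ⟨∑ j ∈ I, w j • (j : EuclideanSpace ℝ (Fin n)), hzK, ?_⟩
      rw [Finset.smul_sum]
      have hterm : ∀ j ∈ I, (n:ℝ) • (w j • (j : EuclideanSpace ℝ (Fin n)))
          = (((n:ℝ)+1)/m) • (j : EuclideanSpace ℝ (Fin n))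
            - (if j = i then (i : EuclideanSpace ℝ (Fin n)) else 0) := by
        intro j hj
        rcases eq_or_ne j i with rfl | hne'
        · rw [hw]; dsimp only
          rw [if_pos rfl, if_pos rfl, smul_smul]
          have hc : (n:ℝ) * (((n:ℝ)+1)/(m*(n:ℝ)) - (n:ℝ)⁻¹) = ((n:ℝ)+1)/m - 1 := by
            field_simp
          rw [hc, sub_smul, one_smul]
        · rw [hw]; dsimp only
          rw [if_neg hne', if_neg hne', sub_zero, sub_zero, smul_smul]
          congr 1
          field_simp
      rw [Finset.sum_congr rfl hterm, Finset.sum_sub_distrib, Finset.sum_ite_eq' I i, if_pos hi,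
        ← Finset.smul_sum, ← hsObj]
      rw [vadd_eq_add, neg_add_eq_sub]
  obtain ⟨t, ht⟩ := hiter
  refine ⟨t, fun x hx => ?_⟩
  have h1 : t ∈ F ⟨x, hx⟩ := Set.mem_iInter.1 ht ⟨x, hx⟩
  rw [hF] at h1
  rw [Set.mem_vadd_set_iff_neg_vadd_mem] at h1
  rw [Set.mem_vadd_set_iff_neg_vadd_mem, Set.smul_set_neg, Set.mem_neg]
  convert h1 using 1
  rw [vadd_eq_add, vadd_eq_add]
  abel

/-- Bipolar theorem (hard inclusion). -/
lemma bipolar_subset {n : ℕ} {C : Set (EuclideanSpace ℝ (Fin n))}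
    (hconv : Convex ℝ C) (hcl : IsClosed C) (h0 : (0 : EuclideanSpace ℝ (Fin n)) ∈ C) :
    polarSet (polarSet C) ⊆ C := by
  intro x hx
  by_contra hxC
  obtain ⟨f, u, hfC, hfx⟩ := geometric_hahn_banach_closed_point hconv hcl hxC
  have hu : (0:ℝ) < u := by simpa using hfC 0 h0
  set a := u⁻¹ • (InnerProductSpace.toDual ℝ (EuclideanSpace ℝ (Fin n))).symm f with ha
  have haC : a ∈ polarSet C := by
    intro y hy
    have h1 : (inner ℝ a y : ℝ) = u⁻¹ * f y := by
      rw [ha, real_inner_smul_left, InnerProductSpace.toDual_symm_apply]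
    rw [h1]
    calc u⁻¹ * f y ≤ u⁻¹ * u :=
          mul_le_mul_of_nonneg_left (hfC y hy).le (by positivity)
      _ = 1 := inv_mul_cancel₀ hu.ne'
  have h2 := hx a haC
  have h3 : (inner ℝ x a : ℝ) = u⁻¹ * f x := by
    rw [real_inner_comm, ha, real_inner_smul_left, InnerProductSpace.toDual_symm_apply]
  rw [h3] at h2
  have h4 : u⁻¹ * u < u⁻¹ * f x := by
    exact mul_lt_mul_of_pos_left hfx (by positivity)
  rw [inv_mul_cancel₀ hu.ne'] at h4
  linarith

set_option maxHeartbeats 2000000 in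
/-- The main Jung-type inequality for the harmonic diameter. -/
theorem jung_main {n : ℕ} (hn : 1 ≤ n) (K C : Set (EuclideanSpace ℝ (Fin n)))
    (hKconv : Convex ℝ K) (hKcomp : IsCompact K) (hKne : K.Nonempty)
    (hCconv : Convex ℝ C) (hCcomp : IsCompact C) (h0 : 0 ∈ interior C)
    (hMC : MinkowskiCentered C) :
    ((n : ℝ) + 1) ^ 2 / (2 * (n : ℝ) ^ 2) * circumradius K C ≤ DHM K C := by
  classical
  have hν : (0:ℝ) < n := by exact_mod_cast hn
  have h0C : (0 : EuclideanSpace ℝ (Fin n)) ∈ C := interior_subset h0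
  have hCne : C.Nonempty := ⟨0, h0C⟩
  obtain ⟨ε, hε, hball⟩ : ∃ ε > 0, Metric.ball (0 : EuclideanSpace ℝ (Fin n)) ε ⊆ C := by
    rw [mem_interior_iff_mem_nhds, Metric.mem_nhds_iff] at h0
    exact h0
  set s : ℝ := minkAsym C with hs
  have hCsub : C ⊆ s • (-C) := hMC.1
  have hs_le : s ≤ (n:ℝ) := by
    obtain ⟨t, ht⟩ := exists_cover_aux hn hCconv hCcomp hCne
    exact csInf_le ⟨0, fun x hx => hx.1⟩ ⟨hν.le, t, ht⟩
  have hs_nonneg : 0 ≤ s := Real.sInf_nonneg (fun x hx => hx.1)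
  have hs_pos : 0 < s := by
    rcases hs_nonneg.lt_or_eq with h | h
    · exact h
    · exfalso
      rw [← h, zero_smul_set hCne.neg] at hCsub
      have i : Fin n := ⟨0, hn⟩
      set y : EuclideanSpace ℝ (Fin n) := EuclideanSpace.single i (ε/2) with hy
      have hyC : y ∈ C := by
        apply hball
        rw [Metric.mem_ball, dist_zero_right, hy, EuclideanSpace.norm_single,
          Real.norm_eq_abs, abs_of_pos (by positivity)]
        linarith
      have hy0 : y = 0 := Set.mem_zero.1 (hCsub hyC)
      have : ‖y‖ = ε/2 := by
        rw [hy, EuclideanSpace.norm_single, Real.norm_eq_abs, abs_of_pos (by positivity)]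
      rw [hy0, norm_zero] at this
      linarith
  -- polar facts
  set P := polarSet C with hP
  set D := (2:ℝ)⁻¹ • (P - P) with hD
  have hHdef : symHM C = polarSet D := rfl
  have hPneg : ∀ a ∈ P, -(s⁻¹ • a) ∈ P := by
    intro a ha x hx
    obtain ⟨y, hy, rfl⟩ := Set.mem_smul_set.1 (hCsub hx)
    rw [Set.mem_neg] at hy
    have h1 := ha (-y) hy
    rw [real_inner_smul_right, inner_neg_left, real_inner_smul_left]
    rw [inner_neg_right] at h1
    have h2 : s * -(s⁻¹ * (inner ℝ a y : ℝ)) = -(inner ℝ a y : ℝ) := by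
      field_simp
    rw [h2]
    exact h1
  have hmid : ∀ a ∈ P, ((s+1)/(2*s)) • a ∈ D := by
    intro a ha
    have h1 : a - (-(s⁻¹ • a)) ∈ P - P := Set.sub_mem_sub ha (hPneg a ha)
    have h2 : ((s+1)/(2*s)) • a = (2:ℝ)⁻¹ • (a - (-(s⁻¹ • a))) := by
      match_scalars <;> field_simp <;> try ring
    rw [hD, h2]
    exact smul_mem_smul_set h1
  set μ : ℝ := 2*(n:ℝ)/((n:ℝ)+1) with hμ
  have hμpos : 0 < μ := by positivity
  have hHsub : symHM C ⊆ μ • C := by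
    intro y hy
    rw [hHdef] at hy
    have hc0 : ((s+1)/(2*s)) • y ∈ polarSet P := by
      intro a ha
      have h1 := hy _ (hmid a ha)
      rw [real_inner_smul_right] at h1
      rw [real_inner_smul_left]
      exact h1
    have hcC : ((s+1)/(2*s)) • y ∈ C := bipolar_subset hCconv hCcomp.isClosed h0C hc0
    set θ : ℝ := (2*s/(s+1)) / μ with hθ
    have hθ0 : 0 ≤ θ := by positivity
    have hθ1 : θ ≤ 1 := by
      rw [hθ, hμ, div_le_one₀ hμpos, div_le_div_iff₀ (by positivity) (by positivity)]
      nlinarith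
    have hθC : θ • (((s+1)/(2*s)) • y) ∈ C := by
      have h1 := hCconv hcC h0C hθ0 (by linarith : (0:ℝ) ≤ 1 - θ) (by ring)
      simpa using h1
    refine Set.mem_smul_set.2 ⟨θ • (((s+1)/(2*s)) • y), hθC, ?_⟩
    rw [smul_smul, smul_smul]
    have hcoef : μ * θ * ((s+1)/(2*s)) = 1 := by
      rw [hθ, hμ]
      field_simp
    rw [hcoef, one_smul]
  -- scaled copy of K inside symAM K
  obtain ⟨u, hu⟩ := exists_cover_aux hn hKconv hKcomp hKne
  set lam : ℝ := ((n:ℝ)+1)/(2*(n:ℝ)) with hlam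
  have hKA : ∀ x ∈ K, lam • x - (2*(n:ℝ))⁻¹ • u ∈ symAM K := by
    intro x hx
    have h1 := hu hx
    rw [Set.mem_vadd_set_iff_neg_vadd_mem] at h1
    obtain ⟨y, hy, hyeq⟩ := Set.mem_smul_set.1 h1
    rw [Set.mem_neg] at hy
    have h2 : x - (-y) ∈ K - K := Set.sub_mem_sub hx hy
    have hyv : y = (n:ℝ)⁻¹ • (-u + x) := by
      rw [vadd_eq_add] at hyeq
      rw [← hyeq, smul_smul, inv_mul_cancel₀ hν.ne', one_smul]
    have h3 : lam • x - (2*(n:ℝ))⁻¹ • u = (2:ℝ)⁻¹ • (x - (-y)) := by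
      rw [hyv, hlam]
      match_scalars <;> field_simp <;> ring
    rw [h3]
    exact smul_mem_smul_set h2
  -- bound for symAM K
  obtain ⟨M₀, hM₀⟩ := hKcomp.isBounded.subset_closedBall 0
  set M : ℝ := max M₀ 0 with hM
  have hMb : K ⊆ Metric.closedBall 0 M :=
    hM₀.trans (Metric.closedBall_subset_closedBall (le_max_left _ _))
  have hAbound : ∀ z ∈ symAM K, ‖z‖ ≤ M := by
    intro z hz
    obtain ⟨e, he, rfl⟩ := Set.mem_smul_set.1 hz
    obtain ⟨x1, hx1, x2, hx2, rfl⟩ := Set.mem_sub.1 he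
    have hb1 : ‖x1‖ ≤ M := by simpa [Metric.mem_closedBall, dist_zero_right] using hMb hx1
    have hb2 : ‖x2‖ ≤ M := by simpa [Metric.mem_closedBall, dist_zero_right] using hMb hx2
    rw [norm_smul, Real.norm_eq_abs]
    have h4 : ‖x1 - x2‖ ≤ ‖x1‖ + ‖x2‖ := norm_sub_le _ _
    rw [abs_of_pos (by norm_num : (0:ℝ) < (2:ℝ)⁻¹)]
    nlinarith
  -- polar of C bounded, hence symHM C contains a ball
  have hPbound : ∀ a ∈ P, ‖a‖ ≤ 2/ε := by
    intro a ha
    rcases eq_or_ne a 0 with rfl | ha0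
    · rw [norm_zero]; positivity
    · have hna : 0 < ‖a‖ := norm_pos_iff.2 ha0
      have hxC : (ε/2) • ‖a‖⁻¹ • a ∈ C := by
        apply hball
        rw [Metric.mem_ball, dist_zero_right, norm_smul, norm_smul, Real.norm_eq_abs,
          Real.norm_eq_abs, abs_of_pos (by positivity : (0:ℝ) < ε/2),
          abs_of_pos (inv_pos.2 hna), inv_mul_cancel₀ hna.ne']
        linarith
      have h1 := ha _ hxC
      rw [real_inner_smul_right, real_inner_smul_right, real_inner_self_eq_norm_mul_norm] at h1
      have h5 : ‖a‖⁻¹ * (‖a‖ * ‖a‖) = ‖a‖ := by field_simp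
      rw [h5] at h1
      rw [le_div_iff₀ hε]
      nlinarith
  have hDbound : ∀ b ∈ D, ‖b‖ ≤ 2/ε := by
    intro b hb
    rw [hD] at hb
    obtain ⟨e, he, rfl⟩ := Set.mem_smul_set.1 hb
    obtain ⟨a1, ha1, a2, ha2, rfl⟩ := Set.mem_sub.1 he
    have hb1 := hPbound a1 ha1
    have hb2 := hPbound a2 ha2
    rw [norm_smul, Real.norm_eq_abs, abs_of_pos (by norm_num : (0:ℝ) < (2:ℝ)⁻¹)]
    have h4 : ‖a1 - a2‖ ≤ ‖a1‖ + ‖a2‖ := norm_sub_le _ _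
    nlinarith
  have hballH : ∀ y : EuclideanSpace ℝ (Fin n), ‖y‖ ≤ ε/2 → y ∈ symHM C := by
    intro y hy
    rw [hHdef]
    intro b hb
    calc (inner ℝ y b : ℝ) ≤ ‖y‖ * ‖b‖ := real_inner_le_norm y b
      _ ≤ (ε/2) * (2/ε) :=
          mul_le_mul hy (hDbound b hb) (norm_nonneg _) (by positivity)
      _ = 1 := by field_simp
  set ρ₀ : ℝ := max (2*M/ε) 1 with hρ₀
  have hρ₀pos : (0:ℝ) < ρ₀ := lt_of_lt_of_le one_pos (le_max_right _ _)
  have hρ₀S : symAM K ⊆ ρ₀ • symHM C := by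
    intro z hz
    refine Set.mem_smul_set.2 ⟨ρ₀⁻¹ • z, hballH _ ?_, by
      rw [smul_smul, mul_inv_cancel₀ hρ₀pos.ne', one_smul]⟩
    rw [norm_smul, Real.norm_eq_abs, abs_of_pos (inv_pos.2 hρ₀pos)]
    have h1 : ‖z‖ ≤ M := hAbound z hz
    have h2 : 2*M/ε ≤ ρ₀ := le_max_left _ _
    rw [inv_mul_le_iff₀ hρ₀pos]
    rw [div_le_iff₀ hε] at h2
    have hM0 : 0 ≤ M := le_max_right _ _
    nlinarith
  -- assembling
  have hSne : {ρ : ℝ | 0 ≤ ρ ∧ ∃ t : EuclideanSpace ℝ (Fin n), symAM K ⊆ t +ᵥ ρ • symHM C}.Nonempty :=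
    ⟨ρ₀, hρ₀pos.le, 0, by rw [zero_vadd]; exact hρ₀S⟩
  have hkey : ∀ ρ ∈ {ρ : ℝ | 0 ≤ ρ ∧ ∃ t : EuclideanSpace ℝ (Fin n), symAM K ⊆ t +ᵥ ρ • symHM C}, (((n:ℝ)+1)^2/(4*(n:ℝ)^2)) * circumradius K C ≤ ρ := by
    rintro ρ ⟨hρ0, t, hsub⟩
    have hcover : K ⊆ (μ • (t + (2*(n:ℝ))⁻¹ • u)) +ᵥ (ρ * μ^2) • C := by
      intro x hx
      have h1 := hsub (hKA x hx)
      rw [Set.mem_vadd_set_iff_neg_vadd_mem] at h1 ⊢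
      obtain ⟨h', hh', hheq⟩ := Set.mem_smul_set.1 h1
      obtain ⟨c, hc, hceq⟩ := Set.mem_smul_set.1 (hHsub hh')
      refine Set.mem_smul_set.2 ⟨c, hc, ?_⟩
      rw [← hceq] at hheq
      rw [vadd_eq_add] at hheq ⊢
      have hstep : (ρ*μ^2) • c = μ • (ρ • μ • c) := by
        rw [smul_smul, smul_smul]
        ring_nf
      rw [hstep, hheq, hμ, hlam]
      match_scalars <;> field_simp <;> ring
    have hmem : ρ * μ^2 ∈ {ρ' : ℝ | 0 ≤ ρ' ∧ ∃ t', K ⊆ t' +ᵥ ρ' • C} :=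
      ⟨by positivity, _, hcover⟩
    have hR : circumradius K C ≤ ρ * μ^2 := csInf_le ⟨0, fun x hx => hx.1⟩ hmem
    have hfinal : (((n:ℝ)+1)^2/(4*(n:ℝ)^2)) * (ρ * μ^2) = ρ := by
      rw [hμ]
      field_simp
      ring
    calc (((n:ℝ)+1)^2/(4*(n:ℝ)^2)) * circumradius K C
        ≤ (((n:ℝ)+1)^2/(4*(n:ℝ)^2)) * (ρ*μ^2) :=
          mul_le_mul_of_nonneg_left hR (by positivity)
      _ = ρ := hfinal
  have hfin : (((n:ℝ)+1)^2/(4*(n:ℝ)^2)) * circumradius K C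
      ≤ circumradius (symAM K) (symHM C) := le_csInf hSne hkey
  have hgoal : ((n:ℝ)+1)^2/(2*(n:ℝ)^2) = 2 * (((n:ℝ)+1)^2/(4*(n:ℝ)^2)) := by
    field_simp
    ring
  show ((n : ℝ) + 1) ^ 2 / (2 * (n : ℝ) ^ 2) * circumradius K C
      ≤ 2 * circumradius (symAM K) (symHM C)
  rw [hgoal]
  nlinarith [hfin]

/-- Jung-type inequality for the harmonic diameter: for a Minkowski-centered gauge `C` in
`ℝⁿ`, `D_HM(K,C) ≥ ((n+1)²/(2n²)) R(K,C)`; in particular in the plane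
`D_HM(K,C) ≥ (9/8) R(K,C)`. -/
theorem jung_DHM {n : ℕ} (hn : 2 ≤ n) (K C : Set (EuclideanSpace ℝ (Fin n)))
    (hKconv : Convex ℝ K) (hKcomp : IsCompact K) (hKne : K.Nonempty)
    (hCconv : Convex ℝ C) (hCcomp : IsCompact C) (h0 : 0 ∈ interior C)
    (hMC : MinkowskiCentered C) :
    ((n : ℝ) + 1) ^ 2 / (2 * (n : ℝ) ^ 2) * circumradius K C ≤ DHM K C ∧
      (∀ K' C' : Set (EuclideanSpace ℝ (Fin 2)), Convex ℝ K' → IsCompact K' → K'.Nonempty →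
        Convex ℝ C' → IsCompact C' → 0 ∈ interior C' → MinkowskiCentered C' →
        9 / 8 * circumradius K' C' ≤ DHM K' C') := by
  
  constructor
  · exact jung_main (le_trans one_le_two hn) K C hKconv hKcomp hKne hCconv hCcomp h0 hMC
  · intro K' C' h1 h2 h3 h4 h5 h6 h7
    have h := jung_main (by norm_num : 1 ≤ 2) K' C' h1 h2 h3 h4 h5 h6 h7
    have e : (((2:ℕ) : ℝ) + 1) ^ 2 / (2 * ((2:ℕ) : ℝ) ^ 2) = 9 / 8 := by norm_num
    rw [e] at h
    exact h
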